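/- Let A be a Boolean path sum with k_A path variables, m inputs and n outputs, and let B be a Boolean path sum with k_B path variables, k inputs and m outputs. Define the composite path sum A ∘ B to have path-variable space 𝔽₂^{k_A} × 𝔽₂^{k_B} × 𝔽₂^m, scalar s_A·s_B/2^m, phase function P(u,w,y) = P_A(u) + P_B(w) + ∑_{i=1}^m y_i·(O_B(w)_i + I_A(u)_i), output function (u,w,y) ↦ O_A(u) and input function (u,w,y) ↦ I_B(w). Then eval(A ∘ B) equals the matrix product eval(A) · eval(B). -/

import Mathlib

/-- The sign `(−1)^b` for `b ∈ 𝔽₂`: `1` if `b = 0` and `−1` if `b = 1`. -/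
noncomputable def pmSign (b : ZMod 2) : ℂ := if b = 0 then 1 else -1


lemma pmSign_add (a b : ZMod 2) : pmSign (a + b) = pmSign a * pmSign b := by
  rcases (by decide : ∀ x : ZMod 2, x = 0 ∨ x = 1) a with rfl | rfl <;> rcases (by decide : ∀ x : ZMod 2, x = 0 ∨ x = 1) b with rfl | rfl <;> simp [pmSign] <;> decide

lemma sum_pmSign_mul (a : ZMod 2) : ∑ b : ZMod 2, pmSign (b * a) = if a = 0 then 2 else 0 := by
  rw [show (Finset.univ : Finset (ZMod 2)) = {0, 1} by decide]
  rcases (by decide : ∀ x : ZMod 2, x = 0 ∨ x = 1) a with rfl | rfl <;> simp [pmSign, Finset.sum_pair]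

lemma pmSign_sum {ι : Type*} (s : Finset ι) (f : ι → ZMod 2) :
    pmSign (∑ i ∈ s, f i) = ∏ i ∈ s, pmSign (f i) := by
  induction s using Finset.cons_induction with
  | empty => simp [pmSign]
  | cons a s ha ih => rw [Finset.sum_cons, Finset.prod_cons, pmSign_add, ih]

lemma sum_pmSign_dot {m : ℕ} (a : Fin m → ZMod 2) :
    ∑ y : Fin m → ZMod 2, pmSign (∑ i, y i * a i) =
      if a = 0 then (2 : ℂ) ^ m else 0 := by
  have h1 : ∀ y : Fin m → ZMod 2, pmSign (∑ i, y i * a i) = ∏ i, pmSign (y i * a i) :=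
    fun y => pmSign_sum _ _
  simp only [h1]
  rw [show (Finset.univ : Finset (Fin m → ZMod 2)) = Fintype.piFinset (fun _ => Finset.univ) from (Fintype.piFinset_univ).symm, Finset.sum_prod_piFinset Finset.univ (fun i b => pmSign (b * a i))]
  by_cases h : a = 0
  · simp [h, pmSign]
  · obtain ⟨i, hi⟩ := Function.ne_iff.mp h
    rw [if_neg h]
    apply Finset.prod_eq_zero (Finset.mem_univ i)
    rw [sum_pmSign_mul, if_neg (by simpa using hi)]

/-- The matrix `|b⟩⟨c|` whose `(b',c')` entry is `1` if `b' = b` and `c' = c`, else `0`. -/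
noncomputable def ketbra {α β : Type*} [DecidableEq α] [DecidableEq β] (b : α) (c : β) :
    Matrix α β ℂ := fun b' c' => if b' = b ∧ c' = c then 1 else 0

/-- Evaluation of a Boolean path sum with path-variable space `V`, scalar `s`,
phase `P`, output function `O` and input function `I`:
`s · ∑_{v ∈ V} (−1)^{P v} |O v⟩⟨I v|`. -/
noncomputable def psEval {V α β : Type*} [Fintype V] [DecidableEq α] [DecidableEq β]
    (s : ℂ) (P : V → ZMod 2) (O : V → α) (I : V → β) : Matrix α β ℂ :=
  s • ∑ v, pmSign (P v) • ketbra (O v) (I v)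

/-- Soundness of composition of Boolean path sums:
for `A : m → n` (with `k_A` path variables) and `B : k → m` (with `k_B` path variables),
the composite path sum with path variables `(u, w, y) ∈ 𝔽₂^{k_A} × 𝔽₂^{k_B} × 𝔽₂^m`,
scalar `s_A·s_B/2^m`, phase `P_A(u) + P_B(w) + ∑_i y_i (O_{B,i}(w) + I_{A,i}(u))`,
outputs `O_A(u)` and inputs `I_B(w)`, evaluates to `eval(A) · eval(B)`. -/
theorem psEval_comp {kA kB k m n : ℕ}
    (sA : ℂ) (PA : (Fin kA → ZMod 2) → ZMod 2)
    (OA : (Fin kA → ZMod 2) → (Fin n → ZMod 2))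
    (IA : (Fin kA → ZMod 2) → (Fin m → ZMod 2))
    (sB : ℂ) (PB : (Fin kB → ZMod 2) → ZMod 2)
    (OB : (Fin kB → ZMod 2) → (Fin m → ZMod 2))
    (IB : (Fin kB → ZMod 2) → (Fin k → ZMod 2)) :
    psEval (V := (Fin kA → ZMod 2) × (Fin kB → ZMod 2) × (Fin m → ZMod 2))
      (sA * sB / 2 ^ m)
      (fun p => PA p.1 + PB p.2.1 + ∑ i, p.2.2 i * (OB p.2.1 i + IA p.1 i))
      (fun p => OA p.1)
      (fun p => IB p.2.1)
      = psEval sA PA OA IA * psEval sB PB OB IB := by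
  ext r c
  simp only [psEval, ketbra, Matrix.mul_apply, Matrix.smul_apply, Matrix.sum_apply,
    smul_eq_mul, Fintype.sum_prod_type]
  have hZ : ∀ x y : ZMod 2, x + y = 0 ↔ y = x := by decide
  have h2m : ((2:ℂ)^m) ≠ 0 := pow_ne_zero _ two_ne_zero
  -- inner y-sum computation
  have hy : ∀ (u : Fin kA → ZMod 2) (w : Fin kB → ZMod 2),
      (∑ y : Fin m → ZMod 2,
        pmSign (PA u + PB w + ∑ i, y i * (OB w i + IA u i)) *
          (if r = OA u ∧ c = IB w then (1:ℂ) else 0))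
      = 2^m * (pmSign (PA u) * pmSign (PB w) *
          ((if r = OA u ∧ c = IB w then (1:ℂ) else 0) *
           (if IA u = OB w then (1:ℂ) else 0))) := by
    intro u w
    rw [← Finset.sum_mul]
    simp only [pmSign_add]
    rw [show (∑ y : Fin m → ZMod 2, pmSign (PA u) * pmSign (PB w) *
          pmSign (∑ i, y i * (OB w i + IA u i)))
        = pmSign (PA u) * pmSign (PB w) *
          ∑ y : Fin m → ZMod 2, pmSign (∑ i, y i * (OB w i + IA u i)) from
        (Finset.mul_sum _ _ _).symm]
    rw [sum_pmSign_dot (fun i => OB w i + IA u i)]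
    have hcond : ((fun i => OB w i + IA u i) = 0) ↔ IA u = OB w := by
      rw [funext_iff, funext_iff]
      simp only [Pi.zero_apply, hZ]
    rw [if_congr hcond rfl rfl]
    by_cases h : IA u = OB w <;> simp [h] <;> try ring
  -- inner x-sum computation for the RHS
  have hx : ∀ (u : Fin kA → ZMod 2) (w : Fin kB → ZMod 2),
      (∑ x : Fin m → ZMod 2,
        pmSign (PA u) * pmSign (PB w) *
          ((if r = OA u ∧ x = IA u then (1:ℂ) else 0) *
           (if x = OB w ∧ c = IB w then (1:ℂ) else 0)))
      = pmSign (PA u) * pmSign (PB w) *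
          ((if r = OA u ∧ c = IB w then (1:ℂ) else 0) *
           (if IA u = OB w then (1:ℂ) else 0)) := by
    intro u w
    rw [Finset.sum_eq_single (IA u)]
    · by_cases h1 : r = OA u <;> by_cases h2 : c = IB w <;>
        by_cases h3 : IA u = OB w <;> simp [h1, h2, h3] <;> ring
    · intro x _ hxne; simp [hxne]
    · intro h; exact absurd (Finset.mem_univ _) h
  calc sA * sB / 2 ^ m *
      ∑ u : Fin kA → ZMod 2, ∑ w : Fin kB → ZMod 2, ∑ y : Fin m → ZMod 2,
        pmSign (PA u + PB w + ∑ i, y i * (OB w i + IA u i)) *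
          (if r = OA u ∧ c = IB w then (1:ℂ) else 0)
      = sA * sB / 2 ^ m *
        ∑ u : Fin kA → ZMod 2, ∑ w : Fin kB → ZMod 2,
          2^m * (pmSign (PA u) * pmSign (PB w) *
            ((if r = OA u ∧ c = IB w then (1:ℂ) else 0) *
             (if IA u = OB w then (1:ℂ) else 0))) := by
        simp only [hy]
    _ = sA * sB *
        ∑ u : Fin kA → ZMod 2, ∑ w : Fin kB → ZMod 2,
          pmSign (PA u) * pmSign (PB w) *
            ((if r = OA u ∧ c = IB w then (1:ℂ) else 0) *
             (if IA u = OB w then (1:ℂ) else 0)) := by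
        simp only [← Finset.mul_sum]
        field_simp
    _ = ∑ x : Fin m → ZMod 2,
        (sA * ∑ u : Fin kA → ZMod 2, pmSign (PA u) *
            if r = OA u ∧ x = IA u then (1:ℂ) else 0) *
        (sB * ∑ w : Fin kB → ZMod 2, pmSign (PB w) *
            if x = OB w ∧ c = IB w then (1:ℂ) else 0) := by
        symm
        simp only [mul_mul_mul_comm, Finset.sum_mul_sum]
        rw [← Finset.mul_sum]
        congr 1
        rw [Finset.sum_comm]
        refine Finset.sum_congr rfl fun u _ => ?_
        rw [Finset.sum_comm]
        refine Finset.sum_congr rfl fun w _ => ?_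
        exact hx u w
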